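/- Let X = X(F⁰, ℓ, T) be a PFT in standard form over a finite alphabet Σ with MS presentation G_X. Let z ∈ Ω_T, let 0 ≤ q ≤ L_z − 1, and set J = J(z, q) = { (q − i) mod T : 0 ≤ i ≤ T−1, z_i = 1 }. Then for every integer n ≥ 1 with n ≡ 0 (mod T) and every word w ∈ Σ^ℓ, C_n(w^(q))_{G_z} = ⋂_{j ∈ J} C_n(w^(j))_{G_X}. -/

import Mathlib

open scoped BigOperators

/-- Words of length `ℓ` over the alphabet `A`. -/
abbrev Word (A : Type) (ℓ : ℕ) := Fin ℓ → A

/-- The periodic-finite-type shift in standard form `X(F⁰, ℓ, T)`: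
bi-infinite sequences `x` such that for some shift `r < T`, for every index `i ≡ 0 (mod T)`,
the length-`ℓ` word of `σ^r x` starting at `i` avoids `F0`. -/
def pftSF {A : Type} {ℓ : ℕ} (F0 : Set (Word A ℓ)) (T : ℕ) : Set (ℤ → A) :=
  {x | ∃ r : ℕ, r < T ∧
    ∀ i : ℤ, (T : ℤ) ∣ i → (fun k : Fin ℓ => x (i + (r : ℤ) + ((k : ℕ) : ℤ))) ∉ F0}

/-- `P_n(X)`: the points of `X = X(F⁰, ℓ, T)` that are periodic with period `n`. -/
def pftPer {A : Type} {ℓ : ℕ} (F0 : Set (Word A ℓ)) (T n : ℕ) : Set (ℤ → A) :=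
  {x | x ∈ pftSF F0 T ∧ ∀ i : ℤ, x (i + (n : ℤ)) = x i}

/-- The exponential of a formal power series (the standard formula, which agrees with
`exp` whenever the constant term of `S` is `0`). -/
noncomputable def psExp (S : PowerSeries ℚ) : PowerSeries ℚ :=
  PowerSeries.mk fun n =>
    ∑ k ∈ Finset.range (n + 1), PowerSeries.coeff n (S ^ k) / (Nat.factorial k : ℚ)

/-- The zeta function `ζ_X(t) = exp (Σ_{n ≥ 1} |P_n(X)| tⁿ / n)` of the PFT `X(F⁰, ℓ, T)`. -/
noncomputable def pftZeta {A : Type} {ℓ : ℕ} (F0 : Set (Word A ℓ)) (T : ℕ) : PowerSeries ℚ :=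
  psExp (PowerSeries.mk fun n =>
    if n = 0 then 0 else (Nat.card (pftPer F0 T n) : ℚ) / (n : ℚ))

/-- A word-based graph (WBG) with `T` phases, each phase a set of words of length `ℓ`. -/
structure WBG (A : Type) (ℓ T : ℕ) where
  V : Fin T → Set (Word A ℓ)

/-- Vertices of a WBG: pairs `(i, w)` with `w ∈ V^(i)`. -/
abbrev WBG.Vertex {A : Type} {ℓ T : ℕ} (G : WBG A ℓ T) : Type :=
  {p : Fin T × Word A ℓ // p.2 ∈ G.V p.1}

/-- The labeled edge relation of a WBG: there is an edge labeled `a` from `u^(i)` to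
`v^((i+1) mod T)` iff `u₂⋯u_ℓ = v₁⋯v_{ℓ-1}` and `v_ℓ = a`. -/
def WBG.Edge {A : Type} {ℓ T : ℕ} (G : WBG A ℓ T) (u v : G.Vertex) (a : A) : Prop :=
  ((v.1.1 : ℕ) = ((u.1.1 : ℕ) + 1) % T) ∧
  (∀ (k : ℕ) (h : k + 1 < ℓ), u.1.2 ⟨k + 1, h⟩ = v.1.2 ⟨k, by omega⟩) ∧
  (∀ h : ℓ - 1 < ℓ, v.1.2 ⟨ℓ - 1, h⟩ = a)

/-- A path of length `n` (i.e. with `n` edges) in a WBG, together with its label sequence. -/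
structure WBG.Path {A : Type} {ℓ T : ℕ} (G : WBG A ℓ T) (n : ℕ) where
  vtx : Fin (n + 1) → G.Vertex
  lbl : Fin n → A
  adj : ∀ k : Fin n, G.Edge (vtx k.castSucc) (vtx k.succ) (lbl k)

/-- The `n`-periodic bi-infinite repetition `(f 0 ⋯ f (n-1))^∞`. -/
def periodize {A : Type} {n : ℕ} (hn : 0 < n) (f : Fin n → A) : ℤ → A :=
  fun j => f ⟨(j % (n : ℤ)).toNat, by
    have h1 : 0 ≤ j % (n : ℤ) := Int.emod_nonneg j (by exact_mod_cast hn.ne')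
    have h2 : j % (n : ℤ) < (n : ℤ) := Int.emod_lt_of_pos j (by exact_mod_cast hn)
    omega⟩

/-- `C_n(w^(i))_G`: the set of `n`-periodic bi-infinite sequences generated by cycles
of length `n` at the vertex `w^(i)` of `G` (empty if `w ∉ V^(i)` or `n = 0`). -/
def WBG.CnSet {A : Type} {ℓ T : ℕ} (G : WBG A ℓ T) (i : Fin T) (w : Word A ℓ) (n : ℕ) :
    Set (ℤ → A) :=
  {x | ∃ (p : G.Path n) (hn : 0 < n),
    (p.vtx 0).1 = (i, w) ∧ (p.vtx (Fin.last n)).1 = (i, w) ∧ x = periodize hn p.lbl}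

noncomputable instance WBG.instFintypeVertex {A : Type} {ℓ T : ℕ} [Fintype A] (G : WBG A ℓ T) :
    Fintype G.Vertex := Fintype.ofFinite _

noncomputable instance WBG.instDecidableEqVertex {A : Type} {ℓ T : ℕ} (G : WBG A ℓ T) :
    DecidableEq G.Vertex := Classical.decEq _

open Classical in
/-- The (0–1) adjacency matrix of a WBG, with rational entries. -/
noncomputable def WBG.adjMatrix {A : Type} {ℓ T : ℕ} [Fintype A] (G : WBG A ℓ T) :
    Matrix G.Vertex G.Vertex ℚ :=
  Matrix.of fun u v => if ∃ a : A, G.Edge u v a then 1 else 0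

/-- The diagonal block of `(adjacency matrix)^T` indexed by the vertices in phase `i`. -/
noncomputable def WBG.phaseBlock {A : Type} {ℓ T : ℕ} [Fintype A] (G : WBG A ℓ T) (i : ℕ) :
    Matrix {v : G.Vertex // (v.1.1 : ℕ) = i} {v : G.Vertex // (v.1.1 : ℕ) = i} ℚ :=
  Matrix.of fun u v => (G.adjMatrix ^ T) u.1 v.1

/-- The letter `z_m` of a binary word `z ∈ {0,1}^T`, read cyclically (indices mod `T`). -/
def zAt {T : ℕ} (z : Fin T → Bool) (m : ℕ) : Bool :=
  if h : m % T < T then z ⟨m % T, h⟩ else false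

/-- `L_z`: the length of the primitive root `z^♯` of `z`, i.e. the least positive `L`
dividing `T` such that `z = (z^♯)^{T/L}` for the length-`L` prefix `z^♯` of `z`. -/
noncomputable def primLen {T : ℕ} (z : Fin T → Bool) : ℕ :=
  sInf {L : ℕ | 0 < L ∧ L ∣ T ∧ ∀ m : ℕ, zAt z (m + L) = zAt z m}

/-- `W_z`: the number of `1`s in the primitive root `z^♯` of `z`. -/
noncomputable def primOnes {T : ℕ} (z : Fin T → Bool) : ℕ :=
  ((Finset.range (primLen z)).filter fun m => zAt z m = true).card

/-- `N_z = T / L_z`, so that `z = (z^♯)^{N_z}`. -/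
noncomputable def primCopies {T : ℕ} (z : Fin T → Bool) : ℕ := T / primLen z

/-- The WBG `G_z` with `L_z` phases: phase `i` is `Σ^ℓ ∖ F⁰` if `z_i = 1`, else `Σ^ℓ`. -/
noncomputable def zGraph {A : Type} {ℓ : ℕ} (F0 : Set (Word A ℓ)) {T : ℕ} (z : Fin T → Bool) :
    WBG A ℓ (primLen z) :=
  ⟨fun i => if zAt z (i : ℕ) then {w | w ∉ F0} else Set.univ⟩

/-- The MS presentation of the PFT `X(F⁰, ℓ, T)`: the WBG with `T` phases where
`V^(0) = Σ^ℓ ∖ F⁰` and `V^(i) = Σ^ℓ` for `i ≠ 0`. -/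
def msGraph {A : Type} {ℓ : ℕ} (F0 : Set (Word A ℓ)) (T : ℕ) : WBG A ℓ T :=
  ⟨fun i => if (i : ℕ) = 0 then {w | w ∉ F0} else Set.univ⟩

/-- `Ω` is a set of conjugacy-class representatives of `{0,1}^T ∖ {0^T}` (under cyclic
shifts), each representative beginning with the symbol `1`. -/
def IsRepSet {T : ℕ} (Ω : Finset (Fin T → Bool)) : Prop :=
  (∀ z ∈ Ω, zAt z 0 = true) ∧
  ∀ y : Fin T → Bool, (∃ i, y i = true) →
    ∃! z : Fin T → Bool, z ∈ Ω ∧ ∃ q : ℕ, ∀ m : ℕ, zAt z m = zAt y (m + q)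

/-- `J(z,q) = {(q - i) mod T : 0 ≤ i ≤ T-1, z_i = 1}`, as a subset of `Fin T`. -/
def Jset {T : ℕ} (z : Fin T → Bool) (q : ℕ) : Set (Fin T) :=
  {j | ∃ i : Fin T, z i = true ∧ (j : ℕ) = (q + T - (i : ℕ)) % T}

/-- A general PFT `X_{F̂,T}` given an ordered list `F̂^(0), …, F̂^(T-1)` of sets of
forbidden words (`Fh j` is read for `j ∈ {0, …, T-1}` via `j = i mod T`). -/
def pftGen {A : Type} (T : ℕ) (Fh : ℕ → Set (List A)) : Set (ℤ → A) :=
  {x | ∃ r : ℕ, r < T ∧ ∀ i : ℤ, ∀ f ∈ Fh ((i % (T : ℤ)).toNat),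
    ¬ ∀ (k : ℕ) (hk : k < f.length), f.get ⟨k, hk⟩ = x (i + (r : ℤ) + (k : ℤ))}

section Helpers

variable {A : Type} {ℓ T : ℕ}

/-- The word at step `k` of a path determined by initial word `w` and label stream `g`. -/
def wordOf (w : Word A ℓ) (g : ℕ → A) (k : ℕ) : Word A ℓ :=
  fun t => if h : k + (t : ℕ) < ℓ then w ⟨k + (t : ℕ), h⟩ else g (k + (t : ℕ) - ℓ)

lemma wordOf_zero (w : Word A ℓ) (g : ℕ → A) : wordOf w g 0 = w := by
  funext t
  simp only [wordOf, Nat.zero_add, t.isLt, dif_pos, Fin.eta]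

lemma wordOf_succ (w : Word A ℓ) (g : ℕ → A) (k m : ℕ) (hm : m + 1 < ℓ) :
    wordOf w g (k + 1) ⟨m, by omega⟩ = wordOf w g k ⟨m + 1, hm⟩ := by
  simp only [wordOf]
  by_cases h : k + 1 + m < ℓ
  · rw [dif_pos h, dif_pos (by omega : k + (m + 1) < ℓ)]
    exact congrArg w (Fin.ext (show k + 1 + m = k + (m + 1) by omega))
  · rw [dif_neg h, dif_neg (by omega : ¬ k + (m + 1) < ℓ)]
    exact congrArg g (by omega)

lemma wordOf_last (hℓ : 1 ≤ ℓ) (w : Word A ℓ) (g : ℕ → A) (k : ℕ) (h : ℓ - 1 < ℓ) :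
    wordOf w g (k + 1) ⟨ℓ - 1, h⟩ = g k := by
  simp only [wordOf]
  rw [dif_neg (by omega : ¬ k + 1 + (ℓ - 1) < ℓ)]
  exact congrArg g (by omega)

lemma periodize_apply {n : ℕ} (hn : 0 < n) (f : Fin n → A) (m : Fin n) :
    periodize hn f ((m : ℕ) : ℤ) = f m := by
  unfold periodize
  congr 1
  apply Fin.ext
  have h1 : ((m : ℕ) : ℤ) % (n : ℤ) = ((m : ℕ) : ℤ) := by
    apply Int.emod_eq_of_lt (by positivity)
    exact_mod_cast m.isLt
  simp [h1]

lemma path_phase (G : WBG A ℓ T) {n : ℕ} (p : G.Path n) :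
    ∀ (k : ℕ) (h : k < n + 1),
      ((p.vtx ⟨k, h⟩).1.1 : ℕ) = (((p.vtx 0).1.1 : ℕ) + k) % T := by
  intro k
  induction k with
  | zero =>
    intro h
    have h0 : ((p.vtx 0).1.1 : ℕ) < T := (p.vtx 0).1.1.isLt
    simpa using (Nat.mod_eq_of_lt h0).symm
  | succ k ih =>
    intro h
    have hk : k < n := by omega
    have adj := p.adj ⟨k, hk⟩
    have h1 : ((p.vtx ⟨k + 1, h⟩).1.1 : ℕ) = (((p.vtx ⟨k, by omega⟩).1.1 : ℕ) + 1) % T := adj.1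
    rw [h1, ih (by omega), Nat.mod_add_mod, Nat.add_assoc]

lemma path_word (G : WBG A ℓ T) {n : ℕ} (p : G.Path n) (g : ℕ → A)
    (hg : ∀ k : Fin n, g (k : ℕ) = p.lbl k) :
    ∀ (k : ℕ) (h : k < n + 1), (p.vtx ⟨k, h⟩).1.2 = wordOf (p.vtx 0).1.2 g k := by
  intro k
  induction k with
  | zero =>
    intro h
    rw [wordOf_zero]
    have e0 : (⟨0, h⟩ : Fin (n + 1)) = 0 := Fin.ext (by simp)
    rw [e0]
  | succ k ih =>
    intro h
    have hk : k < n := by omega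
    have adj := p.adj ⟨k, hk⟩
    funext t
    by_cases ht : (t : ℕ) + 1 < ℓ
    · have h2 : (p.vtx ⟨k, by omega⟩).1.2 ⟨(t : ℕ) + 1, ht⟩
          = (p.vtx ⟨k + 1, h⟩).1.2 ⟨(t : ℕ), by omega⟩ := adj.2.1 (t : ℕ) ht
      have h3 : (p.vtx ⟨k + 1, h⟩).1.2 t = (p.vtx ⟨k, by omega⟩).1.2 ⟨(t : ℕ) + 1, ht⟩ := by
        rw [h2]
      rw [h3, ih (by omega)]
      exact (wordOf_succ _ _ k (t : ℕ) ht).symm.trans (congrArg _ (Fin.ext rfl))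
    · have hℓ1 : ℓ - 1 < ℓ := by omega
      have htv : t = ⟨ℓ - 1, hℓ1⟩ := Fin.ext (show (t : ℕ) = ℓ - 1 by have := t.isLt; omega)
      have h3 : (p.vtx ⟨k + 1, h⟩).1.2 ⟨ℓ - 1, hℓ1⟩ = p.lbl ⟨k, hk⟩ := adj.2.2 hℓ1
      rw [htv, h3, wordOf_last (by omega) _ _ k hℓ1, hg ⟨k, hk⟩]

/-- Characterization of membership in `C_n(w^(i))_G` in terms of the label word. -/
lemma mem_CnSet_iff (hℓ : 1 ≤ ℓ) (G : WBG A ℓ T) (i : Fin T) (w : Word A ℓ) {n : ℕ}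
    (hn : 0 < n) (hTn : T ∣ n) (x : ℤ → A) :
    x ∈ G.CnSet i w n ↔ ∃ f : Fin n → A, x = periodize hn f ∧
      wordOf w (fun m => f ⟨m % n, Nat.mod_lt m hn⟩) n = w ∧
      ∀ k, k ≤ n → wordOf w (fun m => f ⟨m % n, Nat.mod_lt m hn⟩) k
        ∈ G.V ⟨((i : ℕ) + k) % T, Nat.mod_lt _ i.pos⟩ := by
  constructor
  · rintro ⟨p, hn0, h0, hl, hx⟩
    refine ⟨p.lbl, hx, ?_, ?_⟩
    · have hg : ∀ k : Fin n, (fun m => p.lbl ⟨m % n, Nat.mod_lt m hn⟩) (k : ℕ) = p.lbl k :=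
        fun k => congrArg p.lbl (Fin.ext (Nat.mod_eq_of_lt k.isLt))
      have hword := path_word G p (fun m => p.lbl ⟨m % n, Nat.mod_lt m hn⟩) hg n (Nat.lt_succ_self n)
      have hw0 : (p.vtx 0).1.2 = w := congrArg Prod.snd h0
      rw [hw0] at hword
      rw [← hword]
      exact congrArg Prod.snd hl
    · intro k hk
      have hg : ∀ k : Fin n, (fun m => p.lbl ⟨m % n, Nat.mod_lt m hn⟩) (k : ℕ) = p.lbl k :=
        fun k => congrArg p.lbl (Fin.ext (Nat.mod_eq_of_lt k.isLt))
      have hword := path_word G p (fun m => p.lbl ⟨m % n, Nat.mod_lt m hn⟩) hg k (by omega)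
      have hw0 : (p.vtx 0).1.2 = w := congrArg Prod.snd h0
      rw [hw0] at hword
      have hi0 : (p.vtx 0).1.1 = i := congrArg Prod.fst h0
      have hph : (p.vtx ⟨k, by omega⟩).1.1 = ⟨((i : ℕ) + k) % T, Nat.mod_lt _ i.pos⟩ := by
        apply Fin.ext
        rw [path_phase G p k (by omega), hi0]
      have hv := (p.vtx ⟨k, by omega⟩).2
      rw [hword, hph] at hv
      exact hv
  · rintro ⟨f, hx, hend, hmem⟩
    set g : ℕ → A := fun m => f ⟨m % n, Nat.mod_lt m hn⟩ with hgdef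
    refine ⟨⟨fun k => ⟨(⟨((i : ℕ) + (k : ℕ)) % T, Nat.mod_lt _ i.pos⟩, wordOf w g (k : ℕ)),
        hmem (k : ℕ) (Nat.lt_succ_iff.mp k.isLt)⟩, f, ?_⟩, hn, ?_, ?_, hx⟩
    · intro k
      refine ⟨?_, ?_, ?_⟩
      · show ((i : ℕ) + ((k : ℕ) + 1)) % T = (((i : ℕ) + (k : ℕ)) % T + 1) % T
        rw [Nat.mod_add_mod, Nat.add_assoc]
      · intro m hm
        exact ((wordOf_succ w g (k : ℕ) m hm).symm : _)
      · intro hh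
        show wordOf w g ((k : ℕ) + 1) ⟨ℓ - 1, hh⟩ = f k
        rw [wordOf_last hℓ w g (k : ℕ) hh]
        exact congrArg f (Fin.ext (Nat.mod_eq_of_lt k.isLt))
    · show ((⟨((i : ℕ) + ((0 : Fin (n+1)) : ℕ)) % T, _⟩ : Fin T),
          wordOf w g ((0 : Fin (n+1)) : ℕ)) = (i, w)
      have e1 : ((0 : Fin (n+1)) : ℕ) = 0 := rfl
      refine Prod.ext ?_ ?_
      · apply Fin.ext
        show ((i : ℕ) + ((0 : Fin (n+1)) : ℕ)) % T = (i : ℕ)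
        rw [e1, Nat.add_zero, Nat.mod_eq_of_lt i.isLt]
      · show wordOf w g ((0 : Fin (n+1)) : ℕ) = w
        rw [e1, wordOf_zero]
    · show ((⟨((i : ℕ) + ((Fin.last n) : ℕ)) % T, _⟩ : Fin T),
          wordOf w g ((Fin.last n) : ℕ)) = (i, w)
      have e1 : ((Fin.last n) : ℕ) = n := rfl
      refine Prod.ext ?_ ?_
      · apply Fin.ext
        show ((i : ℕ) + ((Fin.last n) : ℕ)) % T = (i : ℕ)
        obtain ⟨c, rfl⟩ := hTn
        rw [e1, Nat.add_mul_mod_self_left, Nat.mod_eq_of_lt i.isLt]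
      · show wordOf w g ((Fin.last n) : ℕ) = w
        rw [e1]; exact hend

lemma modArith (hT : 0 < T) (q k i : ℕ) (hi : i < T) :
    ((q + T - i) % T + k) % T = 0 ↔ (q + k) % T = i := by
  rw [Nat.mod_add_mod]
  constructor
  · intro h
    obtain ⟨m, hm⟩ := Nat.dvd_of_mod_eq_zero h
    have hmod : (T * m + i) % T = i := by rw [Nat.mul_add_mod]; exact Nat.mod_eq_of_lt hi
    calc (q + k) % T = (q + k + T) % T := (Nat.add_mod_right _ _).symm
      _ = (T * m + i) % T := by rw [show q + k + T = T * m + i from by omega]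
      _ = i := hmod
  · intro h
    have hd : T * ((q + k) / T) + i = q + k := by
      conv_rhs => rw [← Nat.div_add_mod (q + k) T]
      rw [h]
    have hmod : (T * ((q + k) / T) + T) % T = 0 := by
      rw [← Nat.mul_succ, Nat.mul_mod_right]
    rw [show q + T - i + k = T * ((q + k) / T) + T from by omega]
    exact hmod

lemma zAt_eq (hT : 0 < T) (z : Fin T → Bool) (m : ℕ) :
    zAt z m = z ⟨m % T, Nat.mod_lt m hT⟩ := by
  simp [zAt, Nat.mod_lt m hT]

end Helpers

/-- **Lemma.** Let `X = X(F⁰, ℓ, T)` be a PFT in standard form with MS presentation `G_X`,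
`z ∈ Ω_T`, `0 ≤ q ≤ L_z - 1`, and `J = J(z,q)`. Then for every `n ≡ 0 (mod T)` with
`n ≥ 1` and every word `w ∈ Σ^ℓ`, `C_n(w^(q))_{G_z} = ⋂_{j ∈ J} C_n(w^(j))_{G_X}`. -/
theorem zGraph_CnSet_eq_iInter {A : Type} [Fintype A] [Nonempty A] {ℓ T : ℕ}
    (hℓ : 1 ≤ ℓ) (hT : 1 ≤ T) (F0 : Set (Word A ℓ))
    (Ω : Finset (Fin T → Bool)) (hΩ : IsRepSet Ω)
    (z : Fin T → Bool) (hz : z ∈ Ω) (q : ℕ) (hq : q < primLen z)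
    (n : ℕ) (hn : 0 < n) (hTn : T ∣ n) (w : Word A ℓ) :
    (zGraph F0 z).CnSet ⟨q, hq⟩ w n =
      ⋂ j ∈ Jset z q, (msGraph F0 T).CnSet j w n := by
  have hT' : 0 < T := hT
  have hmemS : primLen z ∈ {L : ℕ | 0 < L ∧ L ∣ T ∧ ∀ m : ℕ, zAt z (m + L) = zAt z m} := by
    apply Nat.sInf_mem
    exact ⟨T, hT', dvd_rfl, fun m => by simp [zAt, Nat.add_mod_right]⟩
  obtain ⟨hL0, hLT, hper⟩ := hmemS
  set L := primLen z with hLdef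
  have zAt_mod : ∀ m, zAt z (m % L) = zAt z m := by
    have hmul : ∀ d m, zAt z (m + L * d) = zAt z m := by
      intro d
      induction d with
      | zero => simp
      | succ d ih => intro m; rw [Nat.mul_succ, ← Nat.add_assoc, hper, ih]
    intro m
    conv_rhs => rw [← Nat.mod_add_div m L]
    exact (hmul _ _).symm
  have hLn : L ∣ n := hLT.trans hTn
  have hqT : q < T := lt_of_lt_of_le hq (Nat.le_of_dvd hT' hLT)
  ext x
  simp only [Set.mem_iInter]
  rw [mem_CnSet_iff hℓ (zGraph F0 z) ⟨q, hq⟩ w hn hLn x]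
  constructor
  · rintro ⟨f, hx, hend, hmemz⟩
    have hmemz' : ∀ k, k ≤ n → zAt z (q + k) = true →
        wordOf w (fun m => f ⟨m % n, Nat.mod_lt m hn⟩) k ∉ F0 := by
      intro k hk hzk
      have hm := hmemz k hk
      simp only [zGraph] at hm
      have hz' : zAt z ((q + k) % L) = true := by rw [zAt_mod]; exact hzk
      rw [if_pos hz'] at hm
      exact hm
    intro j hj
    rw [mem_CnSet_iff hℓ (msGraph F0 T) j w hn hTn x]
    refine ⟨f, hx, hend, ?_⟩
    intro k hk
    obtain ⟨i, hzi, hjval⟩ := hj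
    simp only [msGraph]
    by_cases h0 : (((j : ℕ) + k) % T) = 0
    · rw [if_pos h0]
      have hqk : (q + k) % T = (i : ℕ) := by
        rw [hjval] at h0
        exact (modArith hT' q k (i : ℕ) i.isLt).mp h0
      have hz2 : zAt z (q + k) = true := by
        rw [zAt_eq hT']
        rw [show (⟨(q + k) % T, Nat.mod_lt (q + k) hT'⟩ : Fin T) = i from Fin.ext hqk]
        exact hzi
      exact hmemz' k hk hz2
    · rw [if_neg h0]
      trivial
  · intro h
    have hjq : (⟨q, hqT⟩ : Fin T) ∈ Jset z q := by
      refine ⟨⟨0, hT'⟩, ?_, ?_⟩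
      · have h0 := hΩ.1 z hz
        rw [zAt_eq hT'] at h0
        rw [show (⟨0, hT'⟩ : Fin T) = ⟨0 % T, Nat.mod_lt 0 hT'⟩ from Fin.ext (by simp)]
        exact h0
      · show q = (q + T - 0) % T
        rw [Nat.sub_zero, Nat.add_mod_right, Nat.mod_eq_of_lt hqT]
    obtain ⟨f, hx, hend, _⟩ :=
      (mem_CnSet_iff hℓ (msGraph F0 T) ⟨q, hqT⟩ w hn hTn x).mp (h _ hjq)
    refine ⟨f, hx, hend, ?_⟩
    intro k hk
    simp only [zGraph]
    have hz' : zAt z ((q + k) % L) = zAt z (q + k) := zAt_mod _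
    rcases hb : zAt z (q + k) with _ | _
    · rw [if_neg (by rw [hz', hb]; simp)]
      trivial
    · rw [if_pos (by rw [hz', hb])]
      set i : Fin T := ⟨(q + k) % T, Nat.mod_lt (q + k) hT'⟩ with hidef
      have hzi : z i = true := by rw [← zAt_eq hT' z (q + k)]; exact hb
      set j : Fin T := ⟨(q + T - (i : ℕ)) % T, Nat.mod_lt _ hT'⟩ with hjdef
      have hj : j ∈ Jset z q := ⟨i, hzi, rfl⟩
      obtain ⟨f', hx', _, hmem'⟩ :=
        (mem_CnSet_iff hℓ (msGraph F0 T) j w hn hTn x).mp (h _ hj)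
      have hff : f' = f := by
        funext m
        have hpe : periodize hn f = periodize hn f' := hx.symm.trans hx'
        have := congrFun hpe ((m : ℕ) : ℤ)
        rw [periodize_apply, periodize_apply] at this
        exact this.symm
      rw [hff] at hmem'
      have h0 : ((j : ℕ) + k) % T = 0 := by
        apply (modArith hT' q k (i : ℕ) i.isLt).mpr
        rfl
      have hm := hmem' k hk
      simp only [msGraph] at hm
      rw [if_pos h0] at hm
      exact hm
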